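/- Let F be a Ferrers board and let V1, V2 be F-diagonal vertices. Then N(F,V1) = N(F,V2); that is, every full rook placement on F has the same number of markers in R(V1) as in R(V2). -/

import Mathlib

/-!
Common definitions: Ferrers boards, rook placements, pattern avoidance,
following Bloom–Saracino, "A Simple Bijection Between 231-Avoiding and
312-Avoiding Placements".

A square of the `n × n` array `𝒜` is recorded by the pair
`(column index, row index)` (0-based), i.e. the square `(c, r)` is the unit
square with SW corner `(c, r)` and NE corner `(c+1, r+1)`.
-/

/-- A square of the grid, given by its (column index, row index), both 0-based. -/
abbrev Square : Type := ℕ × ℕ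

/-- For a vertex `V = (a, b)`, `RV V` is the set of squares of the rectangle `R(V)`
bounded by the lines `x = 0`, `x = a`, `y = 0`, `y = b`: all squares with column
index `< a` and row index `< b`. -/
def RV (V : ℕ × ℕ) : Finset Square := Finset.range V.1 ×ˢ Finset.range V.2

/-- A Ferrers board contained in the `n × n` array `𝒜`: a set of squares such that
`R(V) ⊆ F` for every vertex `V` of `F`, i.e. a downward- and leftward-closed set
of squares. -/
structure FerrersBoard (n : ℕ) where
  squares : Finset Square
  inArray : ∀ s ∈ squares, s.1 < n ∧ s.2 < n
  closed : ∀ s ∈ squares, ∀ t : Square, t.1 ≤ s.1 → t.2 ≤ s.2 → t ∈ squares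

namespace FerrersBoard

variable {n : ℕ}

/-- The number of squares in column `c` of `F`. -/
def colHeight (F : FerrersBoard n) (c : ℕ) : ℕ :=
  (F.squares.filter fun s => s.1 = c).card

/-- The number of squares in row `r` of `F`. -/
def rowWidth (F : FerrersBoard n) (r : ℕ) : ℕ :=
  (F.squares.filter fun s => s.2 = r).card

/-- The length of the longest row of `F` (the bottom row, by closedness),
i.e. the number of nonempty columns of `F`. -/
def width (F : FerrersBoard n) : ℕ := F.rowWidth 0

/-- The length of the longest column of `F` (the leftmost column, by closedness),
i.e. the number of nonempty rows of `F`. -/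
def height (F : FerrersBoard n) : ℕ := F.colHeight 0

/-- `V` is a vertex of `F`, i.e. a corner of one of the squares of `F`. -/
def IsVertex (F : FerrersBoard n) (V : ℕ × ℕ) : Prop :=
  ∃ s ∈ F.squares, (V.1 = s.1 ∨ V.1 = s.1 + 1) ∧ (V.2 = s.2 ∨ V.2 = s.2 + 1)

/-- `V = (a, b)` lies on the right/up border of `F` (the border of `F` excluding
its vertical left-hand side and horizontal bottom): this border is the staircase
lattice path from the top-left corner `(0, height F)` down to `(width F, 0)`, and
its vertices are exactly those `(a, b)` with `a ≤ width F` and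
`colHeight a ≤ b ≤ colHeight (a - 1)` (where for `a = 0` truncated subtraction
makes the condition read `b = height F`). -/
def IsBorderVertex (F : FerrersBoard n) (V : ℕ × ℕ) : Prop :=
  V.1 ≤ F.width ∧ F.colHeight V.1 ≤ V.2 ∧ V.2 ≤ F.colHeight (V.1 - 1)

/-- `V1, V2` are `F`-diagonal vertices: both lie on the right/up border of `F`
and they are the left and right ends of a diagonal of slope `-1` lying entirely
within `F` (the diagonal from `V1 = (a, b)` to `V2 = (a + k, b - k)` passes, for
each `0 ≤ i < k`, through the square with column `a + i` and row `b - i - 1`,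
and all these squares must belong to `F`). -/
def DiagonalVertices (F : FerrersBoard n) (V1 V2 : ℕ × ℕ) : Prop :=
  F.IsBorderVertex V1 ∧ F.IsBorderVertex V2 ∧
    ∃ k : ℕ, V2.1 = V1.1 + k ∧ V1.2 = V2.2 + k ∧
      ∀ i < k, (V1.1 + i, V2.2 + (k - 1 - i)) ∈ F.squares

end FerrersBoard

/-- `V1` is directly to the left of `V2`. -/
def LeftOf (V1 V2 : ℕ × ℕ) : Prop := V2.1 = V1.1 + 1 ∧ V2.2 = V1.2

/-- `V1` is directly below `V2`. -/
def Below (V1 V2 : ℕ × ℕ) : Prop := V2.1 = V1.1 ∧ V2.2 = V1.2 + 1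

/-- `P` is a rook placement on the Ferrers board `F`: a subset of `F` containing
at most one square (marker) from each column and at most one from each row. -/
def IsRookPlacement {n : ℕ} (F : FerrersBoard n) (P : Finset Square) : Prop :=
  P ⊆ F.squares ∧ (∀ x ∈ P, ∀ y ∈ P, x.1 = y.1 → x = y) ∧
    (∀ x ∈ P, ∀ y ∈ P, x.2 = y.2 → x = y)

/-- `P` is a full rook placement on `F`: a rook placement with exactly one marker
in each (nonempty) column and each (nonempty) row of `F`. -/
def IsFullPlacement {n : ℕ} (F : FerrersBoard n) (P : Finset Square) : Prop :=
  IsRookPlacement F P ∧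
    ∀ s ∈ F.squares, (∃ r, (s.1, r) ∈ P) ∧ (∃ c, (c, s.2) ∈ P)

/-- The set of markers `M` contains an occurrence of the pattern `τ ∈ S₃`:
three markers, listed with strictly increasing columns, whose rows are ordered
as the values of `τ`. -/
def ContainsPattern (M : Finset Square) (τ : Equiv.Perm (Fin 3)) : Prop :=
  ∃ m : Fin 3 → Square, (∀ i, m i ∈ M) ∧
    (∀ i j : Fin 3, i < j → (m i).1 < (m j).1) ∧
    (∀ i j : Fin 3, (m i).2 < (m j).2 ↔ τ i < τ j)

/-- The rook placement `P` on `F` avoids `τ`: for every vertex `V` on the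
right/up border of `F`, the restriction of `P` to `R(V)` (equivalently, the
permutation order-isomorphic to it) avoids `τ`. -/
def AvoidsOn {n : ℕ} (F : FerrersBoard n) (P : Finset Square)
    (τ : Equiv.Perm (Fin 3)) : Prop :=
  ∀ V : ℕ × ℕ, F.IsBorderVertex V → ¬ ContainsPattern (P ∩ RV V) τ

/-- The pattern 231 (in one-line notation), as a permutation of `Fin 3`. -/
def perm231 : Equiv.Perm (Fin 3) := ⟨![1, 2, 0], ![2, 0, 1], by decide, by decide⟩

/-- The pattern 312 (in one-line notation), as a permutation of `Fin 3`. -/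
def perm312 : Equiv.Perm (Fin 3) := ⟨![2, 0, 1], ![1, 2, 0], by decide, by decide⟩

/-- The maximal length of an increasing sequence of markers of `M`. -/
noncomputable def maxIncSeq (M : Finset Square) : ℕ :=
  sSup {k : ℕ | ∃ f : Fin k → Square, (∀ i, f i ∈ M) ∧
    ∀ i j : Fin k, i < j → (f i).1 < (f j).1 ∧ (f i).2 < (f j).2}

/-- `S(P, V)`: the maximal length of an increasing sequence of markers of `P`
inside the rectangle `R(V)`.  The function `fun V => SPV P V`, restricted to the
vertices of the right/up border of `F`, is the sequence `S(P, F)`. -/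
noncomputable def SPV (P : Finset Square) (V : ℕ × ℕ) : ℕ := maxIncSeq (P ∩ RV V)

/-- The `S ↦ S⁺` operation on `F`-sequences, relative to the function
`N = N(F, ·)` counting markers in rectangles: `S⁺(V) = 0` if `S V = 0`, and
`S⁺(V) = N V + 1 - S V` otherwise. -/
def plusSeq (N S : ℕ × ℕ → ℕ) : ℕ × ℕ → ℕ :=
  fun V => if S V = 0 then 0 else N V + 1 - S V

/-- The 231-conditions for the pair `(F, S)`: monotonicity, the 0-conditions and
the (231-)diagonal condition. -/
def Conditions231 {n : ℕ} (F : FerrersBoard n) (S : ℕ × ℕ → ℕ) : Prop :=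
  -- (i) monotonicity conditions
  (∀ V1 V2 : ℕ × ℕ, F.IsBorderVertex V1 → F.IsBorderVertex V2 →
    (LeftOf V1 V2 ∨ Below V1 V2) → S V1 ≤ S V2 ∧ S V2 ≤ S V1 + 1) ∧
  -- (ii) 0-conditions: first and last values are 0, no two consecutive 0s
  S (0, F.height) = 0 ∧ S (F.width, 0) = 0 ∧
  (∀ V1 V2 : ℕ × ℕ, F.IsBorderVertex V1 → F.IsBorderVertex V2 →
    (LeftOf V1 V2 ∨ Below V1 V2) → ¬(S V1 = 0 ∧ S V2 = 0)) ∧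
  -- (iii) diagonal condition
  (∀ V1 V2 : ℕ × ℕ, F.DiagonalVertices V1 V2 → S V1 ≤ S V2)

/-- The 312-conditions for the pair `(F, S)`: the same as the 231-conditions,
with the inequality in the diagonal condition reversed. -/
def Conditions312 {n : ℕ} (F : FerrersBoard n) (S : ℕ × ℕ → ℕ) : Prop :=
  (∀ V1 V2 : ℕ × ℕ, F.IsBorderVertex V1 → F.IsBorderVertex V2 →
    (LeftOf V1 V2 ∨ Below V1 V2) → S V1 ≤ S V2 ∧ S V2 ≤ S V1 + 1) ∧
  S (0, F.height) = 0 ∧ S (F.width, 0) = 0 ∧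
  (∀ V1 V2 : ℕ × ℕ, F.IsBorderVertex V1 → F.IsBorderVertex V2 →
    (LeftOf V1 V2 ∨ Below V1 V2) → ¬(S V1 = 0 ∧ S V2 = 0)) ∧
  (∀ V1 V2 : ℕ × ℕ, F.DiagonalVertices V1 V2 → S V2 ≤ S V1)

private lemma colHeight_gt {n : ℕ} (F : FerrersBoard n) {x r : ℕ}
    (h : (x, r) ∈ F.squares) : r < F.colHeight x := by
  have hsub : (Finset.range (r+1)).image (fun t => ((x, t) : Square)) ⊆
      F.squares.filter (fun s => s.1 = x) := by
    intro p hp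
    simp only [Finset.mem_image, Finset.mem_range] at hp
    obtain ⟨t, ht, rfl⟩ := hp
    exact Finset.mem_filter.mpr ⟨F.closed _ h (x, t) le_rfl (by omega), rfl⟩
  have hle := Finset.card_le_card hsub
  rw [Finset.card_image_of_injective _ (fun u v h => by simpa using h),
    Finset.card_range] at hle
  exact hle

/-- If `V1, V2` are `F`-diagonal vertices of a Ferrers board
`F`, then `N(F,V1) = N(F,V2)`: every full rook placement on `F` has the same
number of markers in `R(V1)` as in `R(V2)`. -/
theorem marker_count_eq_of_diagonal {n : ℕ} (F : FerrersBoard n) (V1 V2 : ℕ × ℕ)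
    (hdiag : F.DiagonalVertices V1 V2) (P : Finset Square)
    (hP : IsFullPlacement F P) :
    (P ∩ RV V1).card = (P ∩ RV V2).card := by
  obtain ⟨hb1, hb2, k, hk1, hk2, hsq⟩ := hdiag
  obtain ⟨a, b⟩ := V1
  obtain ⟨a', c⟩ := V2
  simp only at hk1 hk2 hsq hb1 hb2
  subst hk1 hk2
  obtain ⟨⟨hPF, hcolU, hrowU⟩, hfull⟩ := hP
  -- bounds
  have hcolbound : ∀ p ∈ P, c ≤ p.2 → p.1 < a + k := by
    intro p hp hc
    by_contra hcon
    push_neg at hcon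
    have hmem : ((a + k, c) : Square) ∈ F.squares :=
      F.closed p (hPF hp) (a + k, c) hcon hc
    have h1 := colHeight_gt F hmem
    have h2 : F.colHeight (a + k) ≤ c := hb2.2.1
    omega
  have hrowbound : ∀ p ∈ P, a ≤ p.1 → p.2 < c + k := by
    intro p hp ha
    have hmem : ((a, p.2) : Square) ∈ F.squares :=
      F.closed p (hPF hp) (a, p.2) ha le_rfl
    have h1 := colHeight_gt F hmem
    have h2 : F.colHeight a ≤ c + k := hb1.2.1
    omega
  -- existence
  have hrowex : ∀ j < k, ∃ p ∈ P, p.2 = c + j := by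
    intro j hj
    have h := hsq (k - 1 - j) (by omega)
    have hjj : k - 1 - (k - 1 - j) = j := by omega
    rw [hjj] at h
    obtain ⟨_, ⟨col, hcolm⟩⟩ := hfull _ h
    exact ⟨(col, c + j), hcolm, rfl⟩
  have hcolex : ∀ i < k, ∃ p ∈ P, p.1 = a + i := by
    intro i hi
    have h := hsq i hi
    obtain ⟨⟨r, hrm⟩, _⟩ := hfull _ h
    exact ⟨(a + i, r), hrm, rfl⟩
  -- row/column counts
  have hrows : (P.filter fun p => c ≤ p.2 ∧ p.2 < c + k).card = k := by
    apply le_antisymm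
    · have h := Finset.card_le_card_of_injOn (fun p : Square => p.2 - c)
        (s := P.filter fun p => c ≤ p.2 ∧ p.2 < c + k) (t := Finset.range k)
        (fun p hp => by
          simp only [Finset.mem_coe, Finset.mem_filter] at hp
          simp only [Finset.mem_coe, Finset.mem_range]; omega)
        (fun p hp q hq hpq => by
          simp only [Finset.mem_coe, Finset.mem_filter] at hp hq
          have hpq' : p.2 - c = q.2 - c := hpq
          exact hrowU p hp.1 q hq.1 (by omega))
      simpa using h
    · classical
      have := Finset.card_le_card_of_injOn
        (fun j : ℕ => if h : j < k then (hrowex j h).choose else (0, 0))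
        (s := Finset.range k)
        (t := P.filter fun p => c ≤ p.2 ∧ p.2 < c + k)
        (fun j hj => by
          simp only [Finset.mem_coe, Finset.mem_range] at hj
          simp only [dif_pos hj, Finset.mem_coe, Finset.mem_filter]
          obtain ⟨h1, h2⟩ := (hrowex j hj).choose_spec
          exact ⟨h1, by omega, by omega⟩)
        (fun i hi j hj hij => by
          simp only [Finset.coe_range, Set.mem_Iio] at hi hj
          simp only [dif_pos hi, dif_pos hj] at hij
          have h1 := (hrowex i hi).choose_spec.2
          have h2 := (hrowex j hj).choose_spec.2
          rw [hij] at h1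
          omega)
      simpa using this
  have hcols : (P.filter fun p => a ≤ p.1 ∧ p.1 < a + k).card = k := by
    apply le_antisymm
    · have h := Finset.card_le_card_of_injOn (fun p : Square => p.1 - a)
        (s := P.filter fun p => a ≤ p.1 ∧ p.1 < a + k) (t := Finset.range k)
        (fun p hp => by
          simp only [Finset.mem_coe, Finset.mem_filter] at hp
          simp only [Finset.mem_coe, Finset.mem_range]; omega)
        (fun p hp q hq hpq => by
          simp only [Finset.mem_coe, Finset.mem_filter] at hp hq
          have hpq' : p.1 - a = q.1 - a := hpq
          exact hcolU p hp.1 q hq.1 (by omega))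
      simpa using h
    · classical
      have := Finset.card_le_card_of_injOn
        (fun i : ℕ => if h : i < k then (hcolex i h).choose else (0, 0))
        (s := Finset.range k)
        (t := P.filter fun p => a ≤ p.1 ∧ p.1 < a + k)
        (fun i hi => by
          simp only [Finset.mem_coe, Finset.mem_range] at hi
          simp only [dif_pos hi, Finset.mem_coe, Finset.mem_filter]
          obtain ⟨h1, h2⟩ := (hcolex i hi).choose_spec
          exact ⟨h1, by omega, by omega⟩)
        (fun i hi j hj hij => by
          simp only [Finset.coe_range, Set.mem_Iio] at hi hj
          simp only [dif_pos hi, dif_pos hj] at hij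
          have h1 := (hcolex i hi).choose_spec.2
          have h2 := (hcolex j hj).choose_spec.2
          rw [hij] at h1
          omega)
      simpa using this
  -- splits
  have hsplit1 : (P.filter fun p => c ≤ p.2 ∧ p.2 < c + k) =
      (P.filter fun p => p.1 < a ∧ c ≤ p.2 ∧ p.2 < c + k) ∪
      (P.filter fun p => a ≤ p.1 ∧ p.1 < a + k ∧ c ≤ p.2 ∧ p.2 < c + k) := by
    ext p
    simp only [Finset.mem_filter, Finset.mem_union]
    constructor
    · rintro ⟨hp, h1, h2⟩
      have := hcolbound p hp h1
      rcases lt_or_ge p.1 a with h | h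
      · exact Or.inl ⟨hp, h, h1, h2⟩
      · exact Or.inr ⟨hp, h, this, h1, h2⟩
    · rintro (⟨hp, _, h1, h2⟩ | ⟨hp, _, _, h1, h2⟩) <;> exact ⟨hp, h1, h2⟩
  have hsplit2 : (P.filter fun p => a ≤ p.1 ∧ p.1 < a + k) =
      (P.filter fun p => a ≤ p.1 ∧ p.1 < a + k ∧ p.2 < c) ∪
      (P.filter fun p => a ≤ p.1 ∧ p.1 < a + k ∧ c ≤ p.2 ∧ p.2 < c + k) := by
    ext p
    simp only [Finset.mem_filter, Finset.mem_union]
    constructor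
    · rintro ⟨hp, h1, h2⟩
      have := hrowbound p hp h1
      rcases lt_or_ge p.2 c with h | h
      · exact Or.inl ⟨hp, h1, h2, h⟩
      · exact Or.inr ⟨hp, h1, h2, h, this⟩
    · rintro (⟨hp, h1, h2, _⟩ | ⟨hp, h1, h2, _⟩) <;> exact ⟨hp, h1, h2⟩
  have hd1 : Disjoint (P.filter fun p => p.1 < a ∧ c ≤ p.2 ∧ p.2 < c + k)
      (P.filter fun p => a ≤ p.1 ∧ p.1 < a + k ∧ c ≤ p.2 ∧ p.2 < c + k) := by
    rw [Finset.disjoint_left]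
    intro p hp hq
    simp only [Finset.mem_filter] at hp hq
    omega
  have hd2 : Disjoint (P.filter fun p => a ≤ p.1 ∧ p.1 < a + k ∧ p.2 < c)
      (P.filter fun p => a ≤ p.1 ∧ p.1 < a + k ∧ c ≤ p.2 ∧ p.2 < c + k) := by
    rw [Finset.disjoint_left]
    intro p hp hq
    simp only [Finset.mem_filter] at hp hq
    omega
  have hAX : (P.filter fun p => p.1 < a ∧ c ≤ p.2 ∧ p.2 < c + k).card +
      (P.filter fun p => a ≤ p.1 ∧ p.1 < a + k ∧ c ≤ p.2 ∧ p.2 < c + k).card = k := by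
    rw [← Finset.card_union_of_disjoint hd1, ← hsplit1, hrows]
  have hBX : (P.filter fun p => a ≤ p.1 ∧ p.1 < a + k ∧ p.2 < c).card +
      (P.filter fun p => a ≤ p.1 ∧ p.1 < a + k ∧ c ≤ p.2 ∧ p.2 < c + k).card = k := by
    rw [← Finset.card_union_of_disjoint hd2, ← hsplit2, hcols]
  -- express the two intersections
  have hV1 : P ∩ RV (a, c + k) =
      (P.filter fun p => p.1 < a ∧ p.2 < c) ∪
      (P.filter fun p => p.1 < a ∧ c ≤ p.2 ∧ p.2 < c + k) := by
    ext p
    simp only [Finset.mem_inter, RV, Finset.mem_product, Finset.mem_range,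
      Finset.mem_filter, Finset.mem_union]
    constructor
    · rintro ⟨hp, h1, h2⟩
      rcases lt_or_ge p.2 c with h | h
      · exact Or.inl ⟨hp, h1, h⟩
      · exact Or.inr ⟨hp, h1, h, h2⟩
    · rintro (⟨hp, h1, h2⟩ | ⟨hp, h1, _, h2⟩) <;> exact ⟨hp, h1, by omega⟩
  have hV2 : P ∩ RV (a + k, c) =
      (P.filter fun p => p.1 < a ∧ p.2 < c) ∪
      (P.filter fun p => a ≤ p.1 ∧ p.1 < a + k ∧ p.2 < c) := by
    ext p
    simp only [Finset.mem_inter, RV, Finset.mem_product, Finset.mem_range,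
      Finset.mem_filter, Finset.mem_union]
    constructor
    · rintro ⟨hp, h1, h2⟩
      rcases lt_or_ge p.1 a with h | h
      · exact Or.inl ⟨hp, h, h2⟩
      · exact Or.inr ⟨hp, h, h1, h2⟩
    · rintro (⟨hp, h1, h2⟩ | ⟨hp, _, h1, h2⟩) <;> exact ⟨hp, by omega, h2⟩
  have hd3 : Disjoint (P.filter fun p => p.1 < a ∧ p.2 < c)
      (P.filter fun p => p.1 < a ∧ c ≤ p.2 ∧ p.2 < c + k) := by
    rw [Finset.disjoint_left]
    intro p hp hq
    simp only [Finset.mem_filter] at hp hq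
    omega
  have hd4 : Disjoint (P.filter fun p => p.1 < a ∧ p.2 < c)
      (P.filter fun p => a ≤ p.1 ∧ p.1 < a + k ∧ p.2 < c) := by
    rw [Finset.disjoint_left]
    intro p hp hq
    simp only [Finset.mem_filter] at hp hq
    omega
  rw [hV1, hV2, Finset.card_union_of_disjoint hd3, Finset.card_union_of_disjoint hd4]
  omega
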